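/- Let d, m ∈ ℕ, p ∈ [2, ∞), δ ∈ (0, ∞), K ∈ ℝ, let A : ℝ^d → ℝ^d and B : ℝ^d → M_{d×m}(ℝ) be linear maps, and assume that for all Y ∈ ℝ^d \ {0} it holds that ⟨Y, A Y⟩ + δ‖Y‖² + ((1 + δ)/2) ‖B Y‖_F² + (p − 1 + pδ) ‖(B Y)ᵀ Y‖² / ‖Y‖² ≤ K ‖Y‖². Then for all Y ∈ ℝ^d \ {0}, all ζ ∈ ℝ^d, and all ξ ∈ M_{d×m}(ℝ) it holds that ⟨Y, A Y + ζ⟩ + (1/2) ‖B Y + ξ‖_F² + ((p − 2)/2) ‖(B Y + ξ)ᵀ Y‖² / ‖Y‖² ≤ K ‖Y‖² + ((p − 1)(1 + δ⁻¹)/2) ‖ξ‖_F² + (1/(4δ)) ‖ζ‖². -/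

import Mathlib

open scoped BigOperators RealInnerProductSpace

set_option maxHeartbeats 1000000 in
/-- The combined drift–diffusion perturbation estimate: if the linear maps
`A : ℝ^d → ℝ^d` and `B : ℝ^d → M_{d×m}(ℝ)` satisfy, for all `Y ≠ 0`,
`⟨Y, A Y⟩ + δ‖Y‖² + ((1 + δ)/2) ‖B Y‖_F² + (p − 1 + pδ) ‖(B Y)ᵀ Y‖²/‖Y‖² ≤ K ‖Y‖²`,
then for all `Y ≠ 0`, `ζ ∈ ℝ^d`, `ξ ∈ M_{d×m}(ℝ)`,
`⟨Y, A Y + ζ⟩ + (1/2) ‖B Y + ξ‖_F² + ((p − 2)/2) ‖(B Y + ξ)ᵀ Y‖²/‖Y‖²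
  ≤ K ‖Y‖² + ((p − 1)(1 + δ⁻¹)/2) ‖ξ‖_F² + (1/(4δ)) ‖ζ‖²`.
(The Frobenius norm is written out as a sum of squares of entries, and `Aᵀ Y` as the
vector `j ↦ ∑ i, A i j * Y i`.) -/
theorem drift_diffusion_perturbation_estimate
    (d m : ℕ) (p δ K : ℝ) (hp : 2 ≤ p) (hδ : 0 < δ)
    (A : EuclideanSpace ℝ (Fin d) →ₗ[ℝ] EuclideanSpace ℝ (Fin d))
    (B : EuclideanSpace ℝ (Fin d) →ₗ[ℝ] Matrix (Fin d) (Fin m) ℝ)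
    (hAB : ∀ Y : EuclideanSpace ℝ (Fin d), Y ≠ 0 →
      ⟪Y, A Y⟫ + δ * ‖Y‖ ^ 2
        + ((1 + δ) / 2) * (∑ i : Fin d, ∑ j : Fin m, (B Y i j) ^ 2)
        + (p - 1 + p * δ) * (∑ j : Fin m, (∑ i : Fin d, B Y i j * Y i) ^ 2) / ‖Y‖ ^ 2
      ≤ K * ‖Y‖ ^ 2) :
    ∀ Y : EuclideanSpace ℝ (Fin d), Y ≠ 0 →
      ∀ (ζ : EuclideanSpace ℝ (Fin d)) (ξ : Matrix (Fin d) (Fin m) ℝ),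
      ⟪Y, A Y + ζ⟫ + (1 / 2) * (∑ i : Fin d, ∑ j : Fin m, ((B Y + ξ) i j) ^ 2)
        + ((p - 2) / 2) * (∑ j : Fin m, (∑ i : Fin d, (B Y + ξ) i j * Y i) ^ 2) / ‖Y‖ ^ 2
      ≤ K * ‖Y‖ ^ 2 + ((p - 1) * (1 + δ⁻¹) / 2) * (∑ i : Fin d, ∑ j : Fin m, (ξ i j) ^ 2)
        + (1 / (4 * δ)) * ‖ζ‖ ^ 2 := by
  intro Y hY ζ ξ
  have hu : (0:ℝ) < ‖Y‖ ^ 2 := pow_pos (norm_pos_iff.mpr hY) 2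
  have hδne : δ ≠ 0 := hδ.ne'
  set u : ℝ := ‖Y‖ ^ 2 with hudef
  set F : ℝ := ∑ i : Fin d, ∑ j : Fin m, (B Y i j) ^ 2 with hF
  set X : ℝ := ∑ i : Fin d, ∑ j : Fin m, (ξ i j) ^ 2 with hX
  set G : ℝ := ∑ j : Fin m, (∑ i : Fin d, B Y i j * Y i) ^ 2 with hG
  have hXnn : 0 ≤ X := by positivity
  have hGnn : 0 ≤ G := by positivity
  clear_value u F X G
  -- pointwise Young
  have key : ∀ b x : ℝ, (b + x) ^ 2 ≤ (1 + δ) * b ^ 2 + (1 + δ⁻¹) * x ^ 2 := by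
    intro b x
    have h1 : δ * δ⁻¹ = 1 := mul_inv_cancel₀ hδ.ne'
    nlinarith [sq_nonneg (δ * b - x), sq_nonneg x, hδ, mul_nonneg hδ.le (sq_nonneg x)]
  -- inner product split
  have hinner : ⟪Y, A Y + ζ⟫ = ⟪Y, A Y⟫ + ⟪Y, ζ⟫ := inner_add_right Y (A Y) ζ
  have hzeta : ⟪Y, ζ⟫ ≤ δ * u + (1 / (4 * δ)) * ‖ζ‖ ^ 2 := by
    have h := real_inner_le_norm Y ζ
    have h2 : ‖Y‖ * ‖ζ‖ - δ * ‖Y‖ ^ 2 ≤ ‖ζ‖ ^ 2 / (4 * δ) := by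
      rw [le_div_iff₀ (by linarith : (0:ℝ) < 4 * δ)]
      nlinarith [sq_nonneg (2 * δ * ‖Y‖ - ‖ζ‖)]
    have h3 : (1 / (4 * δ)) * ‖ζ‖ ^ 2 = ‖ζ‖ ^ 2 / (4 * δ) := by ring
    rw [hudef, h3]
    linarith
  -- Frobenius bound
  have h3 : (∑ i : Fin d, ∑ j : Fin m, ((B Y + ξ) i j) ^ 2)
      ≤ (1 + δ) * F + (1 + δ⁻¹) * X := by
    calc (∑ i : Fin d, ∑ j : Fin m, ((B Y + ξ) i j) ^ 2)
        ≤ ∑ i : Fin d, ∑ j : Fin m,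
            ((1 + δ) * (B Y i j) ^ 2 + (1 + δ⁻¹) * (ξ i j) ^ 2) := by
          refine Finset.sum_le_sum fun i _ => Finset.sum_le_sum fun j _ => ?_
          rw [Matrix.add_apply]; exact key _ _
      _ = (1 + δ) * F + (1 + δ⁻¹) * X := by
          simp [hF, hX, Finset.sum_add_distrib, Finset.mul_sum]
  -- column sums bound
  have hnormY : (∑ i : Fin d, (Y i) ^ 2) = u := by
    rw [hudef, EuclideanSpace.norm_eq, Real.sq_sqrt (by positivity)]
    simp [sq_abs]
  have hW : (∑ j : Fin m, (∑ i : Fin d, ξ i j * Y i) ^ 2) ≤ X * u := by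
    calc (∑ j : Fin m, (∑ i : Fin d, ξ i j * Y i) ^ 2)
        ≤ ∑ j : Fin m, (∑ i : Fin d, (ξ i j) ^ 2) * (∑ i : Fin d, (Y i) ^ 2) := by
          refine Finset.sum_le_sum fun j _ => ?_
          exact Finset.sum_mul_sq_le_sq_mul_sq _ _ _
      _ = X * u := by
          rw [← Finset.sum_mul, hnormY, hX, Finset.sum_comm]
  have h4 : (∑ j : Fin m, (∑ i : Fin d, (B Y + ξ) i j * Y i) ^ 2)
      ≤ (1 + δ) * G + (1 + δ⁻¹) * (X * u) := by
    have step : (∑ j : Fin m, (∑ i : Fin d, (B Y + ξ) i j * Y i) ^ 2)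
        ≤ ∑ j : Fin m, ((1 + δ) * (∑ i : Fin d, B Y i j * Y i) ^ 2
            + (1 + δ⁻¹) * (∑ i : Fin d, ξ i j * Y i) ^ 2) := by
      refine Finset.sum_le_sum fun j _ => ?_
      have : (∑ i : Fin d, (B Y + ξ) i j * Y i)
          = (∑ i : Fin d, B Y i j * Y i) + (∑ i : Fin d, ξ i j * Y i) := by
        rw [← Finset.sum_add_distrib]
        refine Finset.sum_congr rfl fun i _ => ?_
        rw [Matrix.add_apply]; ring
      rw [this]; exact key _ _
    calc (∑ j : Fin m, (∑ i : Fin d, (B Y + ξ) i j * Y i) ^ 2)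
        ≤ ∑ j : Fin m, ((1 + δ) * (∑ i : Fin d, B Y i j * Y i) ^ 2
            + (1 + δ⁻¹) * (∑ i : Fin d, ξ i j * Y i) ^ 2) := step
      _ = (1 + δ) * G + (1 + δ⁻¹) * (∑ j : Fin m, (∑ i : Fin d, ξ i j * Y i) ^ 2) := by
          simp [hG, Finset.sum_add_distrib, Finset.mul_sum]
      _ ≤ (1 + δ) * G + (1 + δ⁻¹) * (X * u) :=
          add_le_add_right (mul_le_mul_of_nonneg_left hW (by positivity)) _
  -- divide h4 by u
  have hT : ((p - 2) / 2) * (∑ j : Fin m, (∑ i : Fin d, (B Y + ξ) i j * Y i) ^ 2) / u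
      ≤ ((p - 2) / 2) * ((1 + δ) * (G / u) + (1 + δ⁻¹) * X) := by
    rw [mul_div_assoc]
    have hp2 : (0:ℝ) ≤ (p - 2) / 2 := by linarith
    refine mul_le_mul_of_nonneg_left ?_ hp2
    calc (∑ j : Fin m, (∑ i : Fin d, (B Y + ξ) i j * Y i) ^ 2) / u
        ≤ ((1 + δ) * G + (1 + δ⁻¹) * (X * u)) / u := by
          gcongr
      _ = (1 + δ) * (G / u) + (1 + δ⁻¹) * X := by
          field_simp
  have hAB' := hAB Y hY
  rw [mul_div_assoc, ← hudef] at hAB'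
  rw [← hF, ← hG] at hAB'
  have hgnn : 0 ≤ G / u := div_nonneg hGnn hu.le
  rw [hinner]
  have hhalf : (1/2:ℝ) * (∑ i : Fin d, ∑ j : Fin m, ((B Y + ξ) i j) ^ 2)
      ≤ (1 + δ)/2 * F + (1 + δ⁻¹)/2 * X := by linarith
  have hkey2 : (p - 2)/2 * ((1 + δ) * (G / u) + (1 + δ⁻¹) * X)
      ≤ (p - 1 + p * δ) * (G / u) + (p - 2) * (1 + δ⁻¹)/2 * X := by
    nlinarith [mul_nonneg hgnn (by linarith : (0:ℝ) ≤ p),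
      mul_nonneg (mul_nonneg hgnn hδ.le) (by linarith : (0:ℝ) ≤ p + 2),
      mul_nonneg hgnn hδ.le]
  have hxi : (1 + δ⁻¹)/2 * X + (p - 2) * (1 + δ⁻¹)/2 * X = (p - 1) * (1 + δ⁻¹)/2 * X := by
    ring
  linarith [hzeta, hhalf, hT, hkey2, hAB']
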